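/- arXiv:1511.07832 — 3 statements merged into one kernel-verified Lean document; each statement's English description precedes it below -/
import Mathlib

section
/- Let C_h(x) = Σ_{i≥0} C_{i,h} x^i be the generating function of Dyck paths of bounded height h. Then C_0(x) = 1 and C_h(x) = 1/(1 − x·C_{h−1}(x)) for h ≥ 1 (as an identity of formal power series, or of functions for |x| small), and evaluation at x = 1/4 gives C_h(1/4) = 2(h+1)/(h+2) for all h ≥ 0. In particular Σ_{i≥0} C_{i,h}/4^i = 2(h+1)/(h+2). -/
def pathHeight {n : ℕ} (s : Fin n → Bool) (j : ℕ) : ℤ :=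
  ∑ t ∈ Finset.range j, if h : t < n then (if s ⟨t, h⟩ then 1 else -1) else 0

noncomputable def boundedDyck (i h : ℕ) : ℕ :=
  Nat.card {s : Fin (2*i) → Bool //
    (∀ j ≤ 2*i, 0 ≤ pathHeight s j ∧ pathHeight s j ≤ (h : ℤ)) ∧
    pathHeight s (2*i) = 0}

def stp {n : ℕ} (s : Fin n → Bool) (t : ℕ) : ℤ :=
  if h : t < n then (if s ⟨t, h⟩ then 1 else -1) else 0

lemma pathHeight_def {n : ℕ} (s : Fin n → Bool) (j : ℕ) :
    pathHeight s j = ∑ t ∈ Finset.range j, stp s t := rfl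

@[simp] lemma pathHeight_zero {n : ℕ} (s : Fin n → Bool) : pathHeight s 0 = 0 := by
  simp [pathHeight]

lemma pathHeight_succ {n : ℕ} (s : Fin n → Bool) (j : ℕ) :
    pathHeight s (j+1) = pathHeight s j + stp s j := by
  rw [pathHeight_def, pathHeight_def, Finset.sum_range_succ]

lemma stp_eq {n : ℕ} (s : Fin n → Bool) (t : ℕ) (ht : t < n) :
    stp s t = if s ⟨t, ht⟩ then 1 else -1 := by simp [stp, ht]

lemma stp_cases {n : ℕ} (s : Fin n → Bool) (t : ℕ) (ht : t < n) :
    stp s t = 1 ∨ stp s t = -1 := by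
  rw [stp_eq s t ht]; by_cases h : s ⟨t, ht⟩ <;> simp [h]

def IsPath (i h : ℕ) (s : Fin (2*i) → Bool) : Prop :=
  (∀ j ≤ 2*i, 0 ≤ pathHeight s j ∧ pathHeight s j ≤ (h:ℤ)) ∧ pathHeight s (2*i) = 0

section Glue

variable {n j : ℕ}

def glue (n j : ℕ) (hj : j ≤ n) (a : Fin (2*j) → Bool) (b : Fin (2*(n-j)) → Bool) :
    Fin (2*(n+1)) → Bool :=
  fun t => if h0 : t.val = 0 then true
    else if ht : t.val - 1 < 2*j then a ⟨t.val - 1, ht⟩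
    else if h1 : t.val = 2*j+1 then false
    else b ⟨t.val - (2*j+2), by have := t.isLt; omega⟩

variable (hj : j ≤ n) (a : Fin (2*j) → Bool) (b : Fin (2*(n-j)) → Bool)

lemma glue_zero (h2 : 0 < 2*(n+1)) : glue n j hj a b ⟨0, h2⟩ = true := by simp [glue]

lemma glue_a (t : ℕ) (ht : t < 2*j) (h2 : t+1 < 2*(n+1)) :
    glue n j hj a b ⟨t+1, h2⟩ = a ⟨t, ht⟩ := by
  simp only [glue]
  rw [dif_neg (by omega), dif_pos (by omega : t+1-1 < 2*j)]
  exact congrArg a (Fin.ext (by simp))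

lemma glue_mid (h2 : 2*j+1 < 2*(n+1)) : glue n j hj a b ⟨2*j+1, h2⟩ = false := by
  simp only [glue]
  rw [dif_neg (by omega), dif_neg (by omega)]
  simp

lemma glue_b (t : ℕ) (ht : t < 2*(n-j)) (h2 : 2*j+2+t < 2*(n+1)) :
    glue n j hj a b ⟨2*j+2+t, h2⟩ = b ⟨t, ht⟩ := by
  simp only [glue]
  rw [dif_neg (by omega), dif_neg (by omega), dif_neg (by omega)]
  exact congrArg b (Fin.ext (by simp))

end Glue

section GlueHeights

variable {n j : ℕ} (hj : j ≤ n) (a : Fin (2*j) → Bool) (b : Fin (2*(n-j)) → Bool)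

lemma glue_height_a : ∀ l ≤ 2*j, pathHeight (glue n j hj a b) (l+1) = pathHeight a l + 1 := by
  intro l
  induction l with
  | zero =>
    intro _
    rw [pathHeight_succ, pathHeight_zero, pathHeight_zero,
      stp_eq _ 0 (by omega), glue_zero]
    simp
  | succ k ih =>
    intro hk
    rw [pathHeight_succ, ih (by omega), stp_eq _ (k+1) (by omega),
      glue_a hj a b k (by omega), pathHeight_succ, stp_eq _ k (by omega)]
    ring

lemma glue_height_b (haend : pathHeight a (2*j) = 0) :
    ∀ l ≤ 2*(n-j), pathHeight (glue n j hj a b) (2*j+2+l) = pathHeight b l := by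
  intro l
  induction l with
  | zero =>
    intro _
    have h1 : (2:ℕ)*j+2 = (2*j+1)+1 := by ring
    rw [h1, pathHeight_succ, show (2:ℕ)*j+1 = 2*j+1 from rfl,
      glue_height_a hj a b (2*j) le_rfl, haend, stp_eq _ (2*j+1) (by omega), glue_mid]
    simp
  | succ k ih =>
    intro hk
    have h1 : (2:ℕ)*j+2+(k+1) = (2*j+2+k)+1 := by ring
    rw [h1, pathHeight_succ, ih (by omega), stp_eq _ (2*j+2+k) (by omega),
      glue_b hj a b k (by omega), pathHeight_succ, stp_eq _ k (by omega)]

lemma isPath_glue {h : ℕ} (ha : IsPath j h a) (hb : IsPath (n-j) (h+1) b) :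
    IsPath (n+1) (h+1) (glue n j hj a b) := by
  have hbnd : ∀ l ≤ 2*(n+1), 0 ≤ pathHeight (glue n j hj a b) l ∧
      pathHeight (glue n j hj a b) l ≤ ((h+1 : ℕ) : ℤ) := by
    intro l hl
    push_cast
    rcases Nat.eq_zero_or_pos l with rfl | hl0
    · simp; positivity
    rcases le_or_gt l (2*j+1) with hcase | hcase
    · obtain ⟨l', rfl⟩ : ∃ l', l = l'+1 := ⟨l-1, by omega⟩
      rw [glue_height_a hj a b l' (by omega)]
      have := ha.1 l' (by omega)
      push_cast at this
      omega
    · obtain ⟨l', rfl⟩ : ∃ l', l = 2*j+2+l' := ⟨l-(2*j+2), by omega⟩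
      rw [glue_height_b hj a b ha.2 l' (by omega)]
      have := hb.1 l' (by omega)
      push_cast at this
      omega
  refine ⟨hbnd, ?_⟩
  have h2 := glue_height_b hj a b ha.2 (2*(n-j)) le_rfl
  rw [show (2:ℕ)*j+2+2*(n-j) = 2*(n+1) by omega] at h2
  rw [h2]; exact hb.2

end GlueHeights

lemma pathHeight_parity {n : ℕ} (s : Fin n → Bool) (j : ℕ) (hj : j ≤ n) :
    (pathHeight s j) % 2 = (j : ℤ) % 2 := by
  induction j with
  | zero => simp [pathHeight]
  | succ k ih =>
    have hk : k < n := hj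
    have ihk := ih (Nat.le_of_lt hk)
    rcases stp_cases s k hk with h | h <;> rw [pathHeight_succ, h] <;> push_cast <;> omega

section Forward

variable {n h : ℕ} {s : Fin (2*(n+1)) → Bool}

lemma hex_of (hs : IsPath (n+1) (h+1) s) : ∃ k, pathHeight s (2*k+2) = 0 :=
  ⟨n, by rw [show (2:ℕ)*n+2 = 2*(n+1) by ring]; exact hs.2⟩

lemma find_le (hs : IsPath (n+1) (h+1) s) (hex : ∃ k, pathHeight s (2*k+2) = 0) :
    Nat.find hex ≤ n :=
  Nat.find_le (by rw [show (2:ℕ)*n+2 = 2*(n+1) by ring]; exact hs.2)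

lemma pos_before (hs : IsPath (n+1) (h+1) s) (hex : ∃ k, pathHeight s (2*k+2) = 0) :
    ∀ l, 1 ≤ l → l ≤ 2*(Nat.find hex)+1 → 1 ≤ pathHeight s l := by
  intro l hl1 hl2
  have hJn := find_le hs hex
  have h0 : 0 ≤ pathHeight s l := (hs.1 l (by omega)).1
  by_contra hcon
  have hz : pathHeight s l = 0 := by omega
  have hpar := pathHeight_parity s l (by omega)
  rw [hz] at hpar
  have hleven : l % 2 = 0 := by omega
  obtain ⟨k, rfl⟩ : ∃ k, l = 2*k := ⟨l/2, by omega⟩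
  have hk1 : 1 ≤ k := by omega
  have := Nat.find_min hex (m := k-1) (by omega)
  rw [show (2:ℕ)*(k-1)+2 = 2*k by omega] at this
  exact this hz

lemma s_first (hs : IsPath (n+1) (h+1) s) (hex : ∃ k, pathHeight s (2*k+2) = 0) :
    s ⟨0, by omega⟩ = true := by
  have h1 := pos_before hs hex 1 le_rfl (by omega)
  have h1' : (1:ℤ) ≤ pathHeight s (0+1) := h1
  rw [pathHeight_succ, pathHeight_zero, stp_eq _ 0 (by omega)] at h1'
  by_contra hcon
  rw [Bool.not_eq_true] at hcon
  rw [hcon] at h1'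
  norm_num at h1'

lemma height_mid (hs : IsPath (n+1) (h+1) s) (hex : ∃ k, pathHeight s (2*k+2) = 0) :
    pathHeight s (2*(Nat.find hex)+1) = 1 ∧ stp s (2*(Nat.find hex)+1) = -1 := by
  set J := Nat.find hex with hJ
  have hJn := find_le hs hex
  have hret : pathHeight s (2*J+2) = 0 := Nat.find_spec hex
  have h1 : pathHeight s (2*J+2) = pathHeight s (2*J+1) + stp s (2*J+1) := by
    rw [show (2:ℕ)*J+2 = (2*J+1)+1 by ring, pathHeight_succ]
  have h2 := pos_before hs hex (2*J+1) (by omega) le_rfl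
  rcases stp_cases s (2*J+1) (by omega) with hc | hc <;> rw [hc] at h1 <;> omega

lemma s_mid (hs : IsPath (n+1) (h+1) s) (hex : ∃ k, pathHeight s (2*k+2) = 0) :
    s ⟨2*(Nat.find hex)+1, by have := find_le hs hex; omega⟩ = false := by
  have := (height_mid hs hex).2
  rw [stp_eq _ _ (by have := find_le hs hex; omega)] at this
  by_contra hcon
  rw [Bool.not_eq_false] at hcon
  rw [hcon] at this
  norm_num at this

end Forward

section Slices

variable {n h : ℕ} {s : Fin (2*(n+1)) → Bool}

def aPart (hs : IsPath (n+1) (h+1) s) (hex : ∃ k, pathHeight s (2*k+2) = 0) :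
    Fin (2*(Nat.find hex)) → Bool :=
  fun t => s ⟨t.val+1, by have := find_le hs hex; have := t.isLt; omega⟩

def bPart (hs : IsPath (n+1) (h+1) s) (hex : ∃ k, pathHeight s (2*k+2) = 0) :
    Fin (2*(n - Nat.find hex)) → Bool :=
  fun t => s ⟨2*(Nat.find hex)+2+t.val, by have := find_le hs hex; have := t.isLt; omega⟩

lemma aPart_height (hs : IsPath (n+1) (h+1) s) (hex : ∃ k, pathHeight s (2*k+2) = 0) :
    ∀ l ≤ 2*(Nat.find hex), pathHeight (aPart hs hex) l = pathHeight s (l+1) - 1 := by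
  have hJn := find_le hs hex
  intro l
  induction l with
  | zero =>
    intro _
    have h1 : pathHeight s (0+1) = pathHeight s 0 + stp s 0 := pathHeight_succ s 0
    rw [pathHeight_zero, stp_eq _ 0 (by omega), s_first hs hex] at h1
    rw [pathHeight_zero, h1]
    simp
  | succ k ih =>
    intro hk
    have hstp : stp (aPart hs hex) k = stp s (k+1) := by
      rw [stp_eq _ k (by omega), stp_eq _ (k+1) (by omega)]
      rfl
    rw [pathHeight_succ, ih (by omega), hstp, pathHeight_succ s (k+1)]
    ring

lemma isPath_aPart (hs : IsPath (n+1) (h+1) s) (hex : ∃ k, pathHeight s (2*k+2) = 0) :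
    IsPath (Nat.find hex) h (aPart hs hex) := by
  have hJn := find_le hs hex
  constructor
  · intro l hl
    rw [aPart_height hs hex l hl]
    have hb := hs.1 (l+1) (by omega)
    have hp := pos_before hs hex (l+1) (by omega) (by omega)
    push_cast at hb ⊢
    omega
  · rw [aPart_height hs hex _ le_rfl]
    have := (height_mid hs hex).1
    omega

lemma bPart_height (hs : IsPath (n+1) (h+1) s) (hex : ∃ k, pathHeight s (2*k+2) = 0) :
    ∀ l ≤ 2*(n - Nat.find hex), pathHeight (bPart hs hex) l = pathHeight s (2*(Nat.find hex)+2+l) := by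
  have hJn := find_le hs hex
  intro l
  induction l with
  | zero =>
    intro _
    rw [pathHeight_zero]
    exact (Nat.find_spec hex).symm
  | succ k ih =>
    intro hk
    have hstp : stp (bPart hs hex) k = stp s (2*(Nat.find hex)+2+k) := by
      rw [stp_eq _ k (by omega), stp_eq _ _ (by omega)]
      rfl
    have h2 : (2:ℕ)*(Nat.find hex)+2+(k+1) = (2*(Nat.find hex)+2+k)+1 := by ring
    rw [pathHeight_succ, ih (by omega), hstp, h2, pathHeight_succ]

lemma isPath_bPart (hs : IsPath (n+1) (h+1) s) (hex : ∃ k, pathHeight s (2*k+2) = 0) :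
    IsPath (n - Nat.find hex) (h+1) (bPart hs hex) := by
  have hJn := find_le hs hex
  constructor
  · intro l hl
    rw [bPart_height hs hex l hl]
    exact hs.1 _ (by omega)
  · have h1 := bPart_height hs hex _ le_rfl
    rw [show (2:ℕ)*(Nat.find hex)+2+2*(n-Nat.find hex) = 2*(n+1) by omega] at h1
    rw [h1]
    exact hs.2

end Slices

lemma glue_find {n h j : ℕ} (hj : j ≤ n) (a : Fin (2*j) → Bool) (b : Fin (2*(n-j)) → Bool)
    (ha : IsPath j h a) (hb : IsPath (n-j) (h+1) b)
    (hex : ∃ k, pathHeight (glue n j hj a b) (2*k+2) = 0) : Nat.find hex = j := by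
  rw [Nat.find_eq_iff]
  constructor
  · have h0 := glue_height_b hj a b ha.2 0 (by omega)
    rw [show (2:ℕ)*j+2+0 = 2*j+2 by ring] at h0
    rw [h0, pathHeight_zero]
  · intro k hk hcon
    have h1 := glue_height_a hj a b (2*k+1) (by omega)
    rw [show (2:ℕ)*k+1+1 = 2*k+2 by ring] at h1
    have h2 := (ha.1 (2*k+1) (by omega)).1
    rw [h1] at hcon
    omega

noncomputable def boundedDyck' (i h : ℕ) : ℕ := Nat.card {s : Fin (2*i) → Bool // IsPath i h s}

lemma boundedDyck_rec (n h : ℕ) :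
    boundedDyck' (n+1) (h+1) =
      ∑ j ∈ Finset.range (n+1), boundedDyck' j h * boundedDyck' (n-j) (h+1) := by
  classical
  set T := (j : Fin (n+1)) × ({a : Fin (2*j.val) → Bool // IsPath j.val h a} ×
    {b : Fin (2*(n-j.val)) → Bool // IsPath (n-j.val) (h+1) b}) with hT
  have hΨ : ∃ Ψ : T → {s : Fin (2*(n+1)) → Bool // IsPath (n+1) (h+1) s}, Function.Bijective Ψ := by
    refine ⟨fun x => ⟨glue n x.1.val (Nat.lt_succ_iff.mp x.1.isLt) x.2.1.val x.2.2.val,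
      isPath_glue _ _ _ x.2.1.2 x.2.2.2⟩, ?_, ?_⟩
    · rintro ⟨j1, ⟨a1, ha1⟩, ⟨b1, hb1⟩⟩ ⟨j2, ⟨a2, ha2⟩, ⟨b2, hb2⟩⟩ heq
      simp only [Subtype.mk.injEq] at heq
      have hj1 := Nat.lt_succ_iff.mp j1.isLt
      have hj2 := Nat.lt_succ_iff.mp j2.isLt
      have hex1 : ∃ k, pathHeight (glue n j1.val hj1 a1 b1) (2*k+2) = 0 :=
        hex_of (isPath_glue hj1 a1 b1 ha1 hb1)
      have hex2 : ∃ k, pathHeight (glue n j2.val hj2 a2 b2) (2*k+2) = 0 :=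
        hex_of (isPath_glue hj2 a2 b2 ha2 hb2)
      have e1 : Nat.find hex1 = j1.val := glue_find hj1 a1 b1 ha1 hb1 hex1
      have e2 : Nat.find hex2 = j2.val := glue_find hj2 a2 b2 ha2 hb2 hex2
      have efind : Nat.find hex1 = Nat.find hex2 := by
        apply le_antisymm
        · exact Nat.find_le (by rw [heq]; exact Nat.find_spec hex2)
        · exact Nat.find_le (by rw [← heq]; exact Nat.find_spec hex1)
      have hjj : j1 = j2 := Fin.ext (by omega)
      subst hjj
      have heq' : glue n j1.val hj1 a1 b1 = glue n j1.val hj1 a2 b2 := heq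
      have haa : a1 = a2 := by
        funext t
        obtain ⟨tv, htv⟩ := t
        have g1 := glue_a hj1 a1 b1 tv htv (by omega)
        have g2 := glue_a hj1 a2 b2 tv htv (by omega)
        rw [← g1, ← g2]
        exact congrFun heq' _
      have hbb : b1 = b2 := by
        funext t
        obtain ⟨tv, htv⟩ := t
        have g1 := glue_b hj1 a1 b1 tv htv (by omega)
        have g2 := glue_b hj1 a2 b2 tv htv (by omega)
        rw [← g1, ← g2]
        exact congrFun heq' _
      subst haa
      subst hbb
      rfl
    · rintro ⟨s, hs⟩
      have hex := hex_of hs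
      have hJn := find_le hs hex
      refine ⟨⟨⟨Nat.find hex, by omega⟩, ⟨aPart hs hex, isPath_aPart hs hex⟩,
        ⟨bPart hs hex, isPath_bPart hs hex⟩⟩, ?_⟩
      apply Subtype.ext
      funext t
      obtain ⟨tv, htv⟩ := t
      show glue n (Nat.find hex) hJn (aPart hs hex) (bPart hs hex) ⟨tv, htv⟩ = s ⟨tv, htv⟩
      rcases Nat.eq_zero_or_pos tv with rfl | h0
      · rw [glue_zero, s_first hs hex]
      rcases le_or_gt tv (2*(Nat.find hex)) with hc1 | hc1
      · obtain ⟨t', rfl⟩ : ∃ t', tv = t'+1 := ⟨tv-1, by omega⟩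
        rw [glue_a _ _ _ t' (by omega) htv]
        rfl
      rcases eq_or_lt_of_le (Nat.succ_le_of_lt hc1) with hc2 | hc2
      · have : tv = 2*(Nat.find hex)+1 := by omega
        subst this
        rw [glue_mid, s_mid hs hex]
      · obtain ⟨t', rfl⟩ : ∃ t', tv = 2*(Nat.find hex)+2+t' := ⟨tv-(2*(Nat.find hex)+2), by omega⟩
        rw [glue_b _ _ _ t' (by omega) htv]
        rfl
  obtain ⟨Ψ, hbij⟩ := hΨ
  have hcard : Nat.card T = boundedDyck' (n+1) (h+1) := Nat.card_eq_of_bijective Ψ hbij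
  rw [← hcard, hT]
  letI : ∀ j : Fin (n+1), Fintype ({a : Fin (2*j.val) → Bool // IsPath j.val h a} ×
      {b : Fin (2*(n-j.val)) → Bool // IsPath (n-j.val) (h+1) b}) := fun j => Fintype.ofFinite _
  rw [Nat.card_eq_fintype_card, Fintype.card_sigma]
  rw [← Fin.sum_univ_eq_sum_range (fun j => boundedDyck' j h * boundedDyck' (n-j) (h+1)) (n+1)]
  congr 1
  funext j
  rw [← Nat.card_eq_fintype_card, Nat.card_prod]
  rfl

lemma pathHeight_window {N : ℕ} (s : Fin N → Bool) (u : ℕ) :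
    ∀ v, (hN : u + v ≤ N) → (∀ t, (ht : t < v) → s ⟨u+t, by omega⟩ = true) →
    pathHeight s (u+v) = pathHeight s u + v := by
  intro v
  induction v with
  | zero => intro _ _; simp
  | succ k ih =>
    intro hv hall
    have h1 : u+(k+1) = (u+k)+1 := by ring
    rw [h1, pathHeight_succ, ih (by omega) (fun t ht => hall t (by omega)),
      stp_eq _ (u+k) (by omega), hall k (by omega)]
    norm_num
    push_cast
    ring

lemma boundedDyck'_le (i h : ℕ) :
    boundedDyck' i h ≤ (2^(h+1)-1)^(2*i/(h+1)) * 2^(2*i - (2*i/(h+1))*(h+1)) := by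
  classical
  set m := h+1 with hm
  set q := 2*i/m with hq
  have hm0 : 0 < m := Nat.succ_pos h
  have hqm' : q*m ≤ 2*i := Nat.div_mul_le_self _ _
  set QM := q*m with hQM
  have hqm : QM ≤ 2*i := hqm'
  set G := {g : Fin m → Bool // g ≠ fun _ => true} with hG
  have hpf1 : ∀ (k : Fin q) (t : Fin m), k.val*m + t.val < 2*i := by
    intro k t
    have h1 : (k.val+1)*m ≤ QM := by rw [hQM]; exact Nat.mul_le_mul_right m k.isLt
    have h2 : k.val*m + t.val < (k.val+1)*m := by
      have : (k.val+1)*m = k.val*m + m := by ring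
      omega
    omega
  have hpf3 : ∀ (r : Fin (2*i - QM)), QM + r.val < 2*i := fun r => by
    have := r.isLt; omega
  have hΦ : ∃ Φ : {s : Fin (2*i) → Bool // IsPath i h s} →
      (Fin q → G) × (Fin (2*i - QM) → Bool), Function.Injective Φ := by
    refine ⟨fun x => ⟨fun k => ⟨fun t => x.val ⟨k.val*m + t.val, hpf1 k t⟩, ?_⟩,
      fun r => x.val ⟨QM + r.val, hpf3 r⟩⟩, ?_⟩
    · -- block not all true
      intro hcon
      obtain ⟨s, hs⟩ := x
      have hall : ∀ t, (ht : t < m) → s ⟨k.val*m + t, by have h5 : k.val*m + t < 2*i := hpf1 k ⟨t, ht⟩; omega⟩ = true := by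
        intro t ht
        have := congrFun hcon ⟨t, ht⟩
        simpa using this
      have hkm : k.val*m + m ≤ 2*i := by
        have h6 : k.val*m + (m-1) < 2*i := hpf1 k ⟨m-1, by omega⟩
        omega
      have hwin := pathHeight_window s (k.val*m) m hkm (fun t ht => hall t ht)
      have hlow := (hs.1 (k.val*m) (by omega)).1
      have hhigh := (hs.1 (k.val*m + m) hkm).2
      rw [hwin] at hhigh
      have : ((h:ℤ)) < (m:ℤ) := by push_cast; omega
      omega
    · intro x y hxy
      have hfst := congrArg Prod.fst hxy
      have hsnd := congrArg Prod.snd hxy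
      simp only at hfst hsnd
      apply Subtype.ext
      funext t
      obtain ⟨tv, htv⟩ := t
      rcases lt_or_ge tv QM with hc | hc
      · have hkq : tv / m < q := Nat.div_lt_of_lt_mul (by rw [hQM, mul_comm] at hc; exact hc)
        have hmod : tv % m < m := Nat.mod_lt _ hm0
        have hco := congrFun hfst ⟨tv/m, hkq⟩
        have hco2 := congrFun (congrArg Subtype.val hco) ⟨tv % m, hmod⟩
        have hdm : tv/m*m + tv%m = tv := by rw [mul_comm]; exact Nat.div_add_mod tv m
        calc x.val ⟨tv, htv⟩ = x.val ⟨tv/m*m + tv%m, by omega⟩ := by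
              exact congrArg x.val (Fin.ext hdm.symm)
          _ = y.val ⟨tv/m*m + tv%m, by omega⟩ := hco2
          _ = y.val ⟨tv, htv⟩ := congrArg y.val (Fin.ext hdm)
      · have hco := congrFun hsnd ⟨tv - QM, by omega⟩
        have hdm : QM + (tv - QM) = tv := by omega
        calc x.val ⟨tv, htv⟩ = x.val ⟨QM + (tv - QM), by omega⟩ := by
              exact congrArg x.val (Fin.ext hdm.symm)
          _ = y.val ⟨QM + (tv - QM), by omega⟩ := hco
          _ = y.val ⟨tv, htv⟩ := congrArg y.val (Fin.ext hdm)
  obtain ⟨Φ, hinj⟩ := hΦ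
  have hle : boundedDyck' i h ≤ Nat.card ((Fin q → G) × (Fin (2*i - QM) → Bool)) :=
    Nat.card_le_card_of_injective Φ hinj
  have hcardG : Nat.card G = 2^m - 1 := by
    rw [hG, Nat.card_eq_fintype_card,
      Fintype.card_subtype_compl (fun g : Fin m → Bool => g = fun _ => true)]
    rw [Fintype.card_subtype_eq]
    simp [Fintype.card_fun]
  have hcardT : Nat.card ((Fin q → G) × (Fin (2*i - QM) → Bool))
      = (2^m - 1)^q * 2^(2*i - QM) := by
    rw [Nat.card_prod, Nat.card_fun, Nat.card_fun, hcardG]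
    simp
  rw [hcardT] at hle
  calc boundedDyck' i h ≤ (2^m - 1)^q * 2^(2*i - QM) := hle
    _ = (2^(h+1)-1)^(2*i/(h+1)) * 2^(2*i - (2*i/(h+1))*(h+1)) := by rw [hQM, hq, hm]

lemma bd_real_bound (i h : ℕ) :
    (boundedDyck' i h : ℝ) * (1/4)^i ≤ (1 - (1/2)^(h+1) : ℝ) ^ (2*i/(h+1)) := by
  have hb := boundedDyck'_le i h
  set m := h+1 with hm
  set q := 2*i/(h+1) with hq
  have hqm' : q*m ≤ 2*i := Nat.div_mul_le_self _ _
  set QM := q*m with hQM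
  have hone : (1:ℕ) ≤ 2^m := Nat.one_le_two_pow
  have hcast : (boundedDyck' i h : ℝ) ≤ ((2:ℝ)^m - 1)^q * 2^(2*i - QM) := by
    have := (Nat.cast_le (α := ℝ)).mpr hb
    push_cast [Nat.cast_sub hone] at this
    convert this using 3
  have hmono : (boundedDyck' i h : ℝ) * (1/4)^i ≤ ((2:ℝ)^m - 1)^q * 2^(2*i - QM) * (1/4)^i :=
    mul_le_mul_of_nonneg_right hcast (by positivity)
  refine hmono.trans_eq ?_
  have hhalf : ((1:ℝ)/2)^m * 2^m = 1 := by rw [← mul_pow]; norm_num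
  have e1 : ((2:ℝ))^(2*i - QM) * (1/4)^i = (1/2)^QM := by
    have key : ((2:ℝ))^(2*i - QM) * (2:ℝ)^QM = 2^(2*i) := by rw [← pow_add]; congr 1; omega
    have h4 : ((1:ℝ)/4)^i = ((2:ℝ)^(2*i))⁻¹ := by
      rw [show (1/4:ℝ) = ((2:ℝ)^2)⁻¹ by norm_num, inv_pow, ← pow_mul]
    have h5 : ((1:ℝ)/2)^QM = ((2:ℝ)^QM)⁻¹ := by rw [one_div, inv_pow]
    rw [h4, h5, ← key, mul_inv]
    have hne : ((2:ℝ))^(2*i-QM) ≠ 0 := by positivity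
    field_simp
  have e2 : ((1:ℝ) - (1/2)^m)^q = ((2:ℝ)^m - 1)^q * (1/2)^QM := by
    have h3 : (1:ℝ) - (1/2)^m = (2^m - 1) * (1/2)^m := by
      have : ((2:ℝ)^m - 1) * (1/2)^m = 2^m * (1/2)^m - (1/2)^m := by ring
      rw [this, show ((2:ℝ))^m * (1/2)^m = 1 by rw [← mul_pow]; norm_num]
    rw [h3, mul_pow, ← pow_mul, hQM, mul_comm m q]
  rw [mul_assoc, e1, e2]

lemma summable_bd_norm (h : ℕ) {x : ℝ} (hx : |x| ≤ 1/4) :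
    Summable (fun i => ‖(boundedDyck' i h : ℝ) * x ^ i‖) := by
  set ρ : ℝ := 1 - (1/2)^(h+1) with hρ
  have hhalf : ((1:ℝ)/2)^(h+1) ≤ (1/2)^1 :=
    pow_le_pow_of_le_one (by norm_num) (by norm_num) (by omega)
  have hρ0 : 0 < ρ := by rw [hρ]; norm_num at hhalf ⊢; linarith
  have hρ1 : ρ < 1 := by
    rw [hρ]; have : (0:ℝ) < (1/2)^(h+1) := by positivity
    linarith
  set r : ℝ := ρ ^ ((1:ℝ)/(h+1)) with hr
  have hr0 : 0 ≤ r := Real.rpow_nonneg hρ0.le _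
  have hr1 : r < 1 := Real.rpow_lt_one hρ0.le hρ1 (by positivity)
  refine Summable.of_nonneg_of_le (fun i => norm_nonneg _) (fun i => ?_)
    ((summable_geometric_of_lt_one hr0 hr1).mul_left ρ⁻¹)
  set q := 2*i/(h+1) with hq
  have step1 : ‖(boundedDyck' i h : ℝ) * x ^ i‖ ≤ (boundedDyck' i h : ℝ) * (1/4)^i := by
    rw [norm_mul, norm_pow]
    have h1 : ‖(boundedDyck' i h : ℝ)‖ = (boundedDyck' i h : ℝ) := by
      rw [Real.norm_eq_abs, abs_of_nonneg (by positivity)]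
    rw [h1]
    refine mul_le_mul_of_nonneg_left ?_ (by positivity)
    exact pow_le_pow_left₀ (norm_nonneg x) (by rwa [Real.norm_eq_abs]) i
  have step2 := bd_real_bound i h
  have hexp : (i:ℝ)/(h+1) - 1 ≤ (q:ℝ) := by
    have h1 := Nat.div_add_mod (2*i) (h+1)
    have h2 : (2*i) % (h+1) < h+1 := Nat.mod_lt _ (by omega)
    have h3 : i < (q+1)*(h+1) := by
      calc i ≤ 2*i := by omega
        _ = (h+1)*q + 2*i%(h+1) := h1.symm
        _ < (h+1)*q + (h+1) := by omega
        _ = (q+1)*(h+1) := by ring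
    have h4 : (i:ℝ) < ((q:ℝ)+1)*((h:ℝ)+1) := by exact_mod_cast h3
    have h5 : (0:ℝ) < (h:ℝ)+1 := by positivity
    have h6 : (i:ℝ)/((h:ℝ)+1) < (q:ℝ)+1 := (div_lt_iff₀ h5).mpr (by linarith)
    linarith
  have step3 : (ρ:ℝ)^q ≤ ρ⁻¹ * r^i := by
    have e0 : (ρ:ℝ)^q = ρ ^ ((q:ℕ):ℝ) := (Real.rpow_natCast ρ q).symm
    have e1 : ρ ^ ((q:ℕ):ℝ) ≤ ρ ^ ((i:ℝ)/(h+1) - 1) :=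
      Real.rpow_le_rpow_of_exponent_ge hρ0 hρ1.le hexp
    have e2 : ρ ^ ((i:ℝ)/(h+1) - 1) = ρ⁻¹ * r^i := by
      rw [Real.rpow_sub hρ0, Real.rpow_one, hr]
      rw [← Real.rpow_natCast (ρ ^ ((1:ℝ)/(h+1))) i, ← Real.rpow_mul hρ0.le]
      rw [show (1:ℝ)/(h+1) * (i:ℕ) = (i:ℝ)/(h+1) by ring]
      rw [div_eq_mul_inv, mul_comm]
    rw [e0]
    exact e1.trans_eq e2
  calc ‖(boundedDyck' i h : ℝ) * x ^ i‖ ≤ (boundedDyck' i h : ℝ) * (1/4)^i := step1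
    _ ≤ ρ^q := step2
    _ ≤ ρ⁻¹ * r^i := step3

lemma bd_eq (i h : ℕ) : boundedDyck i h = boundedDyck' i h := rfl

lemma boundedDyck_zero (h : ℕ) : boundedDyck 0 h = 1 := by
  rw [boundedDyck, Nat.card_eq_one_iff_unique]
  constructor
  · refine ⟨fun a b => Subtype.ext (funext fun t => absurd t.isLt (by omega))⟩
  · refine ⟨⟨fun t => absurd t.isLt (by omega), ?_, ?_⟩⟩
    · intro j hj
      interval_cases j
      simp [pathHeight]
    · simp [pathHeight]

lemma boundedDyck_height_zero (i : ℕ) (hi : 1 ≤ i) : boundedDyck i 0 = 0 := by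
  rw [boundedDyck, Nat.card_eq_zero]
  left
  refine ⟨fun ⟨s, hs, _⟩ => ?_⟩
  have h1 := hs 1 (by omega)
  have h0 : (0:ℕ) < 2*i := by omega
  have : pathHeight s 1 = stp s 0 := by
    rw [show (1:ℕ) = 0 + 1 from rfl, pathHeight_succ]; simp [pathHeight]
  rcases stp_cases s 0 h0 with h | h <;> rw [this, h] at h1 <;> omega

noncomputable def boundedDyckGF (h : ℕ) (x : ℝ) : ℝ :=
  ∑' i : ℕ, (boundedDyck i h : ℝ) * x ^ i

lemma summable_bd (h : ℕ) {x : ℝ} (hx : |x| ≤ 1/4) :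
    Summable (fun i => (boundedDyck i h : ℝ) * x ^ i) :=
  Summable.of_norm (summable_bd_norm h hx)

lemma gf_zero (x : ℝ) : boundedDyckGF 0 x = 1 := by
  rw [boundedDyckGF, tsum_eq_single 0]
  · rw [boundedDyck_zero]; simp
  · intro i hi
    rw [boundedDyck_height_zero i (by omega)]
    simp

lemma gf_rec (h : ℕ) (x : ℝ) (hx : |x| ≤ 1/4) :
    boundedDyckGF (h+1) x = 1 / (1 - x * boundedDyckGF h x) := by
  have hnorm1 : Summable (fun i => ‖(boundedDyck i h : ℝ) * x ^ i‖) := summable_bd_norm h hx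
  have hnorm2 : Summable (fun i => ‖(boundedDyck i (h+1) : ℝ) * x ^ i‖) :=
    summable_bd_norm (h+1) hx
  have hterm : ∀ n : ℕ, (boundedDyck (n+1) (h+1) : ℝ) * x^(n+1)
      = x * ∑ j ∈ Finset.range (n+1),
        ((boundedDyck j h : ℝ) * x^j) * ((boundedDyck (n-j) (h+1) : ℝ) * x^(n-j)) := by
    intro n
    rw [bd_eq, boundedDyck_rec n h]
    push_cast
    rw [Finset.sum_mul, Finset.mul_sum]
    apply Finset.sum_congr rfl
    intro j hj
    have hj' : j ≤ n := by
      have := Finset.mem_range.mp hj; omega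
    rw [← bd_eq, ← bd_eq]
    have hxp : x^(n+1) = x * (x^j * x^(n-j)) := by
      rw [← pow_add, show j + (n-j) = n by omega, pow_succ']
    rw [hxp]
    ring
  set C' := boundedDyckGF h x with hC'
  set C := boundedDyckGF (h+1) x with hC
  have key : C = 1 + x * (C' * C) := by
    conv_lhs => rw [hC, boundedDyckGF, Summable.tsum_eq_zero_add (summable_bd (h+1) hx)]
    have h0 : (boundedDyck 0 (h+1) : ℝ) * x ^ 0 = 1 := by rw [boundedDyck_zero]; simp
    rw [h0, tsum_congr hterm, tsum_mul_left]
    congr 1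
    rw [hC', hC, boundedDyckGF, boundedDyckGF]
    congr 1
    exact (tsum_mul_tsum_eq_tsum_sum_range_of_summable_norm hnorm1 hnorm2).symm
  have h1 : C * (1 - x * C') = 1 := by linear_combination key
  have h2 : (1 - x * C') ≠ 0 := by
    intro hz
    rw [hz, mul_zero] at h1
    norm_num at h1
  rw [eq_div_iff h2]
  exact h1

lemma gf_val (h : ℕ) : boundedDyckGF h (1/4) = 2 * ((h:ℝ) + 1) / ((h:ℝ) + 2) := by
  induction h with
  | zero => rw [gf_zero]; norm_num
  | succ k ih =>
    rw [gf_rec k (1/4) (by rw [abs_of_nonneg] <;> norm_num), ih]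
    have hk2 : ((k:ℝ)+2) ≠ 0 := by positivity
    have hden : 1 - 1/4 * (2*((k:ℝ)+1)/((k:ℝ)+2)) = ((k:ℝ)+3)/(2*((k:ℝ)+2)) := by
      field_simp
      ring
    rw [hden, one_div_div]
    push_cast
    have hk3 : ((k:ℝ)+3) ≠ 0 := by positivity
    field_simp
    ring

/-- `C_0(x) = 1`, `C_h(x) = 1/(1 − x C_{h−1}(x))` for `h ≥ 1` (for `|x|` small), and
`C_h(1/4) = 2(h+1)/(h+2)`, i.e. `Σ_i C_{i,h}/4^i = 2(h+1)/(h+2)`. -/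
theorem boundedDyckGF_formula :
    (∀ x : ℝ, boundedDyckGF 0 x = 1) ∧
    (∀ h : ℕ, 1 ≤ h → ∀ x : ℝ, |x| ≤ 1/4 →
      boundedDyckGF h x = 1 / (1 - x * boundedDyckGF (h-1) x)) ∧
    (∀ h : ℕ, boundedDyckGF h (1/4) = 2 * (h + 1) / (h + 2)) ∧
    (∀ h : ℕ, ∑' i : ℕ, (boundedDyck i h : ℝ) / 4 ^ i = 2 * (h + 1) / (h + 2)) := by
  refine ⟨gf_zero, ?_, gf_val, ?_⟩
  · intro h hh x hx
    obtain ⟨k, rfl⟩ : ∃ k, h = k+1 := ⟨h-1, by omega⟩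
    simpa using gf_rec k x hx
  · intro h
    have e : ∀ i : ℕ, (boundedDyck i h : ℝ) / 4 ^ i = (boundedDyck i h : ℝ) * (1/4) ^ i := by
      intro i
      rw [div_eq_mul_inv, ← inv_pow, ← one_div]
    rw [tsum_congr e]
    exact gf_val h
end

section
/- Let X_n be a set of n ≥ 3 points chosen independently and uniformly at random from S^1 (circle of circumference 1), and let 0 < r ≤ 1. Then with probability at least 1 − 1/n, every x ∈ X_n satisfies d⃗(x, f_r(x)) ≥ r − (2 ln n)/n, and consequently the winding fraction satisfies wf(X_n, r) ≥ r − (2 ln n)/n with probability at least 1 − 1/n. -/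
open MeasureTheory
open Set

noncomputable section


lemma quad_bound {x : ℝ} (h0 : 0 ≤ x) (h1 : x ≤ 1) :
    1 - x ≤ Real.exp (-(x + x^2/2)) := by
  set F : ℝ → ℝ := fun y => (1 - y) * Real.exp (y + y^2/2) with hF
  have hderiv : ∀ y : ℝ, HasDerivAt F (-(y^2) * Real.exp (y + y^2/2)) y := by
    intro y
    have h1 : HasDerivAt (fun y : ℝ => y + y^2/2) (1 + y) y := by
      exact ((hasDerivAt_id' y).add ((hasDerivAt_pow 2 y).div_const 2)).congr_deriv (by norm_num)
    have h2 := h1.exp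
    have h3 : HasDerivAt (fun y : ℝ => 1 - y) (-1) y := by
      exact ((hasDerivAt_const y (1:ℝ)).sub (hasDerivAt_id' y)).congr_deriv (by norm_num)
    have := h3.mul h2
    exact this.congr_deriv (by ring)
  have hmono : AntitoneOn F (Icc 0 1) := by
    apply antitoneOn_of_deriv_nonpos (convex_Icc 0 1)
    · exact (Continuous.mul (by continuity) (by continuity)).continuousOn
    · intro y hy
      exact (hderiv y).differentiableAt.differentiableWithinAt
    · intro y hy
      rw [(hderiv y).deriv]
      nlinarith [Real.exp_pos (y + y^2/2), sq_nonneg y]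
  have hle : F x ≤ F 0 := hmono (by constructor <;> norm_num) ⟨h0, h1⟩ h0
  have hF0 : F 0 = 1 := by simp [hF]
  rw [hF0] at hle
  have hp := Real.exp_pos (x + x^2/2)
  rw [Real.exp_neg, ← one_div, le_div_iff₀ hp]
  exact hle

lemma log_le_half (n : ℕ) (hn : 3 ≤ n) : 2 * Real.log n / n < 1 := by
  have hn0 : (0:ℝ) < n := by positivity
  have h3 : (0:ℝ) < (n:ℝ)/3 := by positivity
  have h1 : Real.log ((n:ℝ)/3) ≤ (n:ℝ)/3 - 1 := Real.log_le_sub_one_of_pos h3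
  have h2 : Real.log ((n:ℝ)/3) = Real.log n - Real.log 3 := by
    rw [Real.log_div (by positivity) (by norm_num)]
  have h4 : Real.log 3 ≤ 2 * Real.log 2 := by
    have : Real.log 3 ≤ Real.log 4 := Real.log_le_log (by norm_num) (by norm_num)
    have h4' : Real.log 4 = 2 * Real.log 2 := by
      rw [show (4:ℝ) = 2^2 by norm_num, Real.log_pow]; push_cast; ring
    linarith
  have h5 : Real.log 2 < 0.6931471808 := Real.log_two_lt_d9
  have hn3 : (3:ℝ) ≤ n := by exact_mod_cast hn
  rw [div_lt_one hn0]
  nlinarith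

lemma pow_est (n : ℕ) (hn : 3 ≤ n) :
    (1 - 2 * Real.log n / n) ^ (n - 1) ≤ 1 / (n:ℝ)^2 := by
  have hn0 : (0:ℝ) < n := by positivity
  set x : ℝ := 2 * Real.log n / n with hx
  have hL : (1:ℝ) ≤ Real.log n := by
    rw [Real.le_log_iff_exp_le hn0]
    have h1 : Real.exp 1 < 2.7182818286 := Real.exp_one_lt_d9
    have : (3:ℝ) ≤ n := by exact_mod_cast hn
    linarith
  have hx0 : 0 ≤ x := by positivity
  have hx1 : x < 1 := log_le_half n hn
  have h1x : (0:ℝ) ≤ 1 - x := by linarith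
  rcases eq_or_lt_of_le hn with h3 | h4
  · -- n = 3
    have hn' : n = 3 := h3.symm
    subst hn'
    have hx23 : (2:ℝ)/3 ≤ x := by
      rw [hx]
      push_cast
      rw [le_div_iff₀ (by norm_num : (0:ℝ) < 3)]
      push_cast at hL
      linarith
    have : (1 - x) ≤ 1/3 := by linarith
    calc (1-x)^(3-1) = (1-x)^2 := by norm_num
      _ ≤ (1/3:ℝ)^2 := pow_le_pow_left₀ h1x this 2
      _ ≤ 1/(3:ℕ)^2 := by norm_num
  · -- n ≥ 4
    have hn4 : (4:ℝ) ≤ n := by exact_mod_cast h4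
    have hL4 : (4:ℝ)/3 ≤ Real.log n := by
      have : Real.log 4 ≤ Real.log n := Real.log_le_log (by norm_num) (by exact_mod_cast hn4)
      have h4' : Real.log 4 = 2 * Real.log 2 := by
        rw [show (4:ℝ) = 2^2 by norm_num, Real.log_pow]; push_cast; ring
      have := Real.log_two_gt_d9
      linarith
    -- key : (n-1) * (x + x^2/2) ≥ 2 * log n
    have hkey : 2 * Real.log n ≤ ((n:ℝ) - 1) * (x + x^2/2) := by
      have hnL : (n:ℝ) ≤ ((n:ℝ)-1) * Real.log n := by nlinarith
      have hid : ((n:ℝ) - 1) * (x + x^2/2) - 2 * Real.log n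
          = 2 * Real.log n * (((n:ℝ)-1) * Real.log n - n) / (n:ℝ)^2 := by
        rw [hx]; field_simp; ring
      have h6 : 0 ≤ 2 * Real.log n * (((n:ℝ)-1) * Real.log n - n) / (n:ℝ)^2 :=
        div_nonneg (mul_nonneg (by linarith) (by linarith)) (by positivity)
      linarith
    have hq : 1 - x ≤ Real.exp (-(x + x^2/2)) := quad_bound hx0 hx1.le
    calc (1-x)^(n-1) ≤ (Real.exp (-(x + x^2/2)))^(n-1) := pow_le_pow_left₀ h1x hq _
      _ = Real.exp ((n-1:ℕ) * (-(x + x^2/2))) := by rw [← Real.exp_nat_mul]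
      _ ≤ Real.exp (-(2 * Real.log n)) := by
          apply Real.exp_le_exp.mpr
          have hcast : ((n-1:ℕ):ℝ) = (n:ℝ) - 1 := by
            push_cast [Nat.cast_sub (by omega : 1 ≤ n)]; ring
          rw [hcast]
          nlinarith [hkey]
      _ = 1 / (n:ℝ)^2 := by
          rw [show -(2*Real.log n) = -Real.log n + -Real.log n by ring, Real.exp_add,
            Real.exp_neg, Real.exp_log hn0]
          field_simp

instance : Fact ((0:ℝ) < 1) := ⟨zero_lt_one⟩

/-- Clockwise distance on the circle `S¹ = ℝ/ℤ`: the representative of `y - x` in `[0,1)`. -/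
noncomputable def cdist (x y : AddCircle (1:ℝ)) : ℝ :=
  ((AddCircle.equivIco 1 0) (y - x)).1

/-- The cyclic system map `f_r : X → X`: each `x` is sent to the clockwise furthest point of
`X` within clockwise distance less than `r` (and fixed if no such maximizer exists). -/
noncomputable def frMap (X : Finset (AddCircle (1:ℝ))) (r : ℝ)
    (x : AddCircle (1:ℝ)) : AddCircle (1:ℝ) :=
  if h : ∃ y ∈ X, cdist x y < r ∧ ∀ z ∈ X, cdist x z < r → cdist x z ≤ cdist x y then
    h.choose
  else x


lemma cdist_nonneg (x y : AddCircle (1:ℝ)) : 0 ≤ cdist x y :=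
  ((AddCircle.equivIco 1 0) (y - x)).2.1

lemma cdist_mk_zero (t : ℝ) : cdist 0 ((t : ℝ) : AddCircle (1:ℝ)) = Int.fract t := by
  unfold cdist
  rw [sub_zero]
  rw [AddCircle.coe_equivIco_mk_apply]
  simp

lemma cdist_self (x : AddCircle (1:ℝ)) : cdist x x = 0 := by
  unfold cdist
  rw [sub_self, show ((0 : AddCircle (1:ℝ))) = (((0:ℝ)) : AddCircle (1:ℝ)) by norm_cast,
    AddCircle.coe_equivIco_mk_apply]
  simp

lemma cdist_eq (x z : AddCircle (1:ℝ)) : cdist x z = cdist 0 (z - x) := by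
  unfold cdist; rw [sub_zero]

lemma measurable_cdist0 : Measurable (fun z : AddCircle (1:ℝ) => cdist 0 z) := by
  have h : Measurable (fun z : AddCircle (1:ℝ) =>
      ((AddCircle.measurableEquivIco (T := 1) 0 z : Ico (0:ℝ) (0+1)) : ℝ)) :=
    measurable_subtype_coe.comp (AddCircle.measurableEquivIco (T := 1) 0).measurable
  have : (fun z : AddCircle (1:ℝ) => cdist 0 z)
      = fun z => ((AddCircle.measurableEquivIco (T := 1) 0 z : Ico (0:ℝ) (0+1)) : ℝ) := by
    funext z; unfold cdist; rw [sub_zero]; rfl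
  rw [this]; exact h

lemma measurable_cdist :
    Measurable (fun p : (AddCircle (1:ℝ)) × (AddCircle (1:ℝ)) => cdist p.1 p.2) := by
  have h2 : Measurable (fun p : (AddCircle (1:ℝ)) × (AddCircle (1:ℝ)) => p.2 - p.1) :=
    (continuous_snd.sub continuous_fst).measurable
  have : (fun p : (AddCircle (1:ℝ)) × (AddCircle (1:ℝ)) => cdist p.1 p.2)
      = (fun z : AddCircle (1:ℝ) => cdist 0 z) ∘ (fun p => p.2 - p.1) := by
    funext p; simp [cdist_eq]
  rw [this]; exact measurable_cdist0.comp h2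

lemma frMap_exists {X : Finset (AddCircle (1:ℝ))} {r : ℝ} (hr : 0 < r)
    {x : AddCircle (1:ℝ)} (hx : x ∈ X) :
    ∃ y ∈ X, cdist x y < r ∧ ∀ z ∈ X, cdist x z < r → cdist x z ≤ cdist x y := by
  classical
  obtain ⟨y, hy, hmax⟩ := (X.filter (fun y => cdist x y < r)).exists_max_image
    (fun y => cdist x y) ⟨x, by simp [hx, cdist_self, hr]⟩
  simp only [Finset.mem_filter] at hy hmax
  exact ⟨y, hy.1, hy.2, fun z hz hzr => hmax z ⟨hz, hzr⟩⟩

lemma frMap_spec {X : Finset (AddCircle (1:ℝ))} {r : ℝ} (hr : 0 < r)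
    {x : AddCircle (1:ℝ)} (hx : x ∈ X) :
    frMap X r x ∈ X ∧ cdist x (frMap X r x) < r ∧
      ∀ z ∈ X, cdist x z < r → cdist x z ≤ cdist x (frMap X r x) := by
  have h := frMap_exists hr hx
  unfold frMap
  rw [dif_pos h]
  exact ⟨h.choose_spec.1, h.choose_spec.2⟩


lemma arc_measurable {a b : ℝ} (x : AddCircle (1:ℝ)) :
    MeasurableSet {z : AddCircle (1:ℝ) | cdist x z ∈ Ico a b} := by
  have : {z : AddCircle (1:ℝ) | cdist x z ∈ Ico a b}
      = (fun z => cdist x z) ⁻¹' (Ico a b) := rfl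
  rw [this]
  exact (measurable_cdist.comp (measurable_const.prodMk measurable_id)) measurableSet_Ico

lemma volume_arc {a b : ℝ} (ha : 0 < a) (hab : a ≤ b) (hb : b ≤ 1) (x : AddCircle (1:ℝ)) :
    volume {z : AddCircle (1:ℝ) | cdist x z ∈ Ico a b} = ENNReal.ofReal (b - a) := by
  have hstep1 : {z : AddCircle (1:ℝ) | cdist x z ∈ Ico a b}
      = (fun z : AddCircle (1:ℝ) => -x + z) ⁻¹' {w : AddCircle (1:ℝ) | cdist 0 w ∈ Ico a b} := by
    ext z
    simp only [mem_setOf_eq, mem_preimage, cdist_eq x z]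
    rw [neg_add_eq_sub]
  rw [hstep1, measure_preimage_add]
  have hmeas : MeasurableSet {w : AddCircle (1:ℝ) | cdist 0 w ∈ Ico a b} := arc_measurable 0
  rw [AddCircle.add_projection_respects_measure 1 0 hmeas]
  have hset : (QuotientAddGroup.mk ⁻¹' {w : AddCircle (1:ℝ) | cdist 0 w ∈ Ico a b}
      ∩ Ioc 0 (0 + 1)) = Ico a b := by
    ext t
    simp only [mem_inter_iff, mem_preimage, mem_setOf_eq, mem_Ico, mem_Ioc, zero_add]
    constructor
    · rintro ⟨⟨h1, h2⟩, h3, h4⟩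
      rw [cdist_mk_zero] at h1 h2
      rcases lt_or_eq_of_le h4 with h5 | h5
      · rw [Int.fract_eq_self.mpr ⟨h3.le, h5⟩] at h1 h2
        exact ⟨h1, h2⟩
      · exfalso
        rw [h5] at h1
        simp [Int.fract_one] at h1  -- fract 1 = 0 < a
        linarith
    · rintro ⟨h1, h2⟩
      have ht0 : 0 ≤ t := le_trans ha.le h1
      have ht1 : t < 1 := lt_of_lt_of_le h2 hb
      rw [cdist_mk_zero, Int.fract_eq_self.mpr ⟨ht0, ht1⟩]
      exact ⟨⟨h1, h2⟩, lt_of_lt_of_le ha h1, ht1.le⟩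
  rw [hset, Real.volume_Ico]

instance : IsProbabilityMeasure (volume : Measure (AddCircle (1:ℝ))) :=
  ⟨by simp [AddCircle.measure_univ]⟩

lemma volume_arc_compl {a b : ℝ} (ha : 0 < a) (hab : a ≤ b) (hb : b ≤ 1) (x : AddCircle (1:ℝ)) :
    volume {z : AddCircle (1:ℝ) | cdist x z ∈ Ico a b}ᶜ = ENNReal.ofReal (1 - (b - a)) := by
  rw [measure_compl (arc_measurable x) (measure_ne_top _ _), volume_arc ha hab hb,
    measure_univ, ← ENNReal.ofReal_one, ← ENNReal.ofReal_sub]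
  linarith


lemma volume_bad (N : ℕ) (i : Fin (N+1)) {a b : ℝ} (ha : 0 < a) (hab : a ≤ b) (hb : b ≤ 1) :
    volume {ω : Fin (N+1) → AddCircle (1:ℝ) | ∀ j, cdist (ω i) (ω j) ∉ Ico a b}
      = ENNReal.ofReal (1 - (b - a)) ^ N := by
  set C := AddCircle (1:ℝ)
  set S : Set (C × (Fin N → C)) := {p | ∀ k, cdist p.1 (p.2 k) ∉ Ico a b} with hS
  have hSm : MeasurableSet S := by
    have : S = ⋂ k, {p : C × (Fin N → C) | cdist p.1 (p.2 k) ∈ Ico a b}ᶜ := by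
      ext p; simp [hS]
    rw [this]
    refine MeasurableSet.iInter fun k => MeasurableSet.compl ?_
    exact (measurable_cdist.comp
      (measurable_fst.prodMk ((measurable_pi_apply k).comp measurable_snd))) measurableSet_Ico
  have hBS : {ω : Fin (N+1) → C | ∀ j, cdist (ω i) (ω j) ∉ Ico a b}
      = (MeasurableEquiv.piFinSuccAbove (fun _ => C) i) ⁻¹' S := by
    ext ω
    simp only [mem_preimage, MeasurableEquiv.piFinSuccAbove_apply, Fin.insertNthEquiv,
      Equiv.coe_fn_symm_mk, mem_setOf_eq, hS]
    constructor
    · intro h k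
      exact h (i.succAbove k)
    · intro h j
      by_cases hj : j = i
      · subst hj
        simp only [cdist_self, mem_Ico, not_and, not_lt]
        intro h'
        linarith
      · obtain ⟨k, hk⟩ := Fin.exists_succAbove_eq hj
        rw [← hk]
        exact h k
  have hsection : ∀ x : C, volume (Prod.mk x ⁻¹' S) = ENNReal.ofReal (1 - (b - a)) ^ N := by
    intro x
    have : Prod.mk x ⁻¹' S = Set.pi univ (fun _ : Fin N => {z : C | cdist x z ∈ Ico a b}ᶜ) := by
      ext y; simp [hS, Set.mem_pi]
    rw [this, volume_pi_pi, volume_arc_compl ha hab hb x, Finset.prod_const,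
      Finset.card_univ, Fintype.card_fin]
  rw [hBS, (volume_preserving_piFinSuccAbove (fun _ : Fin (N+1) => C) i).measure_preimage
    hSm.nullMeasurableSet, MeasureTheory.Measure.volume_eq_prod, Measure.prod_apply hSm]
  simp only [hsection]
  rw [lintegral_const, measure_univ, mul_one]

/-- For `X_n` a sample of `n ≥ 3` independent uniform points on `S¹` and `0 < r ≤ 1`:
with probability at least `1 − 1/n`, every sample point satisfies
`d⃗(x, f_r(x)) ≥ r − (2 ln n)/n`, and consequently the winding fraction `w/ℓ` of every
periodic orbit of `f_r` (winding number over orbit length) is at least `r − (2 ln n)/n`. -/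
theorem winding_fraction_lower_bound (n : ℕ) (hn : 3 ≤ n) (r : ℝ)
    (hr0 : 0 < r) (hr1 : r ≤ 1) :
    ENNReal.ofReal (1 - 1 / (n : ℝ)) ≤
      volume {ω : Fin n → AddCircle (1:ℝ) |
        (∀ i : Fin n,
          r - 2 * Real.log n / n ≤
            cdist (ω i) (frMap (Finset.image ω Finset.univ) r (ω i))) ∧
        (∀ i : Fin n, ∀ m : ℕ, 1 ≤ m →
          (frMap (Finset.image ω Finset.univ) r)^[m] (ω i) = ω i →
          r - 2 * Real.log n / n ≤
            (∑ j ∈ Finset.range m,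
                cdist ((frMap (Finset.image ω Finset.univ) r)^[j] (ω i))
                  ((frMap (Finset.image ω Finset.univ) r)^[j+1] (ω i))) / m)} := by
  classical
  have hn0 : (0:ℝ) < n := by positivity
  set ε : ℝ := 2 * Real.log n / n with hε
  have hεnn : 0 ≤ ε := by
    have := Real.log_natCast_nonneg n
    positivity
  have hPun : volume (univ : Set (Fin n → AddCircle (1:ℝ))) = 1 := by
    rw [← Set.pi_univ Set.univ, volume_pi_pi]
    simp
  -- inclusion of the good event in the target set
  set Bad : Fin n → Set (Fin n → AddCircle (1:ℝ)) :=
    fun i => {ω | ∀ j, cdist (ω i) (ω j) ∉ Ico (r - ε) r} with hBad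
  by_cases hcase : r ≤ ε
  · -- trivial case
    have hTuniv : {ω : Fin n → AddCircle (1:ℝ) |
        (∀ i : Fin n, r - ε ≤ cdist (ω i) (frMap (Finset.image ω Finset.univ) r (ω i))) ∧
        (∀ i : Fin n, ∀ m : ℕ, 1 ≤ m →
          (frMap (Finset.image ω Finset.univ) r)^[m] (ω i) = ω i →
          r - ε ≤ (∑ j ∈ Finset.range m,
                cdist ((frMap (Finset.image ω Finset.univ) r)^[j] (ω i))
                  ((frMap (Finset.image ω Finset.univ) r)^[j+1] (ω i))) / m)} = univ := by
      apply eq_univ_iff_forall.mpr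
      intro ω
      constructor
      · intro i
        have := cdist_nonneg (ω i) (frMap (Finset.image ω Finset.univ) r (ω i))
        linarith
      · intro i m hm _
        have h1 : (0:ℝ) ≤ (∑ j ∈ Finset.range m,
            cdist ((frMap (Finset.image ω Finset.univ) r)^[j] (ω i))
              ((frMap (Finset.image ω Finset.univ) r)^[j+1] (ω i))) / m :=
          div_nonneg (Finset.sum_nonneg fun j _ => cdist_nonneg _ _) (Nat.cast_nonneg m)
        linarith
    rw [hTuniv, hPun]
    apply ENNReal.ofReal_le_one.mpr
    have : (0:ℝ) ≤ 1/(n:ℝ) := by positivity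
    linarith
  · push_neg at hcase
    have ha : 0 < r - ε := by linarith
    have hsub : (⋃ i, Bad i)ᶜ ⊆ {ω : Fin n → AddCircle (1:ℝ) |
        (∀ i : Fin n, r - ε ≤ cdist (ω i) (frMap (Finset.image ω Finset.univ) r (ω i))) ∧
        (∀ i : Fin n, ∀ m : ℕ, 1 ≤ m →
          (frMap (Finset.image ω Finset.univ) r)^[m] (ω i) = ω i →
          r - ε ≤ (∑ j ∈ Finset.range m,
                cdist ((frMap (Finset.image ω Finset.univ) r)^[j] (ω i))
                  ((frMap (Finset.image ω Finset.univ) r)^[j+1] (ω i))) / m)} := by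
      intro ω hω
      rw [mem_compl_iff, mem_iUnion] at hω
      push_neg at hω
      have hω' : ∀ i, ∃ j, cdist (ω i) (ω j) ∈ Ico (r - ε) r := by
        intro i
        have := hω i
        rw [hBad] at this
        simpa [mem_setOf_eq, not_forall, not_not] using this
      set X := Finset.image ω Finset.univ with hX
      have hmem : ∀ i, ω i ∈ X := fun i => Finset.mem_image_of_mem ω (Finset.mem_univ i)
      have hfr : ∀ x ∈ X, r - ε ≤ cdist x (frMap X r x) := by
        intro x hx
        obtain ⟨i, -, rfl⟩ := Finset.mem_image.mp hx
        obtain ⟨j, hj⟩ := hω' i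
        exact le_trans hj.1 ((frMap_spec hr0 (hmem i)).2.2 (ω j) (hmem j) hj.2)
      have hiter : ∀ (i : Fin n) (k : ℕ), (frMap X r)^[k] (ω i) ∈ X := by
        intro i k
        induction k with
        | zero => simpa using hmem i
        | succ k ih =>
            rw [Function.iterate_succ_apply']
            exact (frMap_spec hr0 ih).1
      refine ⟨fun i => hfr (ω i) (hmem i), ?_⟩
      intro i m hm _
      rw [le_div_iff₀ (by exact_mod_cast Nat.lt_of_lt_of_le Nat.zero_lt_one hm : (0:ℝ) < (m:ℝ))]
      calc (r - ε) * m = (Finset.range m).card • (r - ε) := by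
            simp [nsmul_eq_mul]; ring
        _ ≤ ∑ j ∈ Finset.range m,
              cdist ((frMap X r)^[j] (ω i)) ((frMap X r)^[j+1] (ω i)) := by
            apply Finset.card_nsmul_le_sum
            intro j _
            rw [Function.iterate_succ_apply']
            exact hfr _ (hiter i j)
    -- measure bounds
    have hBadm : ∀ i, MeasurableSet (Bad i) := by
      intro i
      simp only [hBad]
      have : {ω : Fin n → AddCircle (1:ℝ) | ∀ j, cdist (ω i) (ω j) ∉ Ico (r - ε) r}
          = ⋂ j, {ω : Fin n → AddCircle (1:ℝ) | cdist (ω i) (ω j) ∈ Ico (r - ε) r}ᶜ := by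
        ext ω; simp
      rw [this]
      refine MeasurableSet.iInter fun j => MeasurableSet.compl ?_
      have hm2 : Measurable fun ω : Fin n → AddCircle (1:ℝ) => cdist (ω i) (ω j) :=
        measurable_cdist.comp (f := fun ω : Fin n → AddCircle (1:ℝ) => (ω i, ω j))
          ((measurable_pi_apply i).prodMk (measurable_pi_apply j))
      exact hm2 measurableSet_Ico
    obtain ⟨N, rfl⟩ : ∃ N, n = N + 1 := ⟨n - 1, by omega⟩
    have hvol : ∀ i, volume (Bad i) = ENNReal.ofReal (1 - ε) ^ N := by
      intro i
      simp only [hBad]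
      have := volume_bad N i ha (by linarith) hr1
      rw [this]
      congr 2
      ring
    have hune : volume (⋃ i, Bad i) ≤ ENNReal.ofReal (1 / ((N+1:ℕ):ℝ)) := by
      calc volume (⋃ i, Bad i) ≤ ∑ i, volume (Bad i) := measure_iUnion_fintype_le _ _
        _ = (N+1 : ℕ) * ENNReal.ofReal (1 - ε) ^ N := by
            simp [hvol, Finset.sum_const]
        _ ≤ (N+1 : ℕ) * ENNReal.ofReal (1 / ((N+1:ℕ):ℝ)^2) := by
            apply mul_le_mul_right
            rw [← ENNReal.ofReal_pow (by linarith : (0:ℝ) ≤ 1 - ε)]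
            apply ENNReal.ofReal_le_ofReal
            have := pow_est (N+1) hn
            simpa [hε, Nat.add_sub_cancel] using this
        _ = ENNReal.ofReal (1 / ((N+1:ℕ):ℝ)) := by
            rw [← ENNReal.ofReal_natCast, ← ENNReal.ofReal_mul (by positivity)]
            congr 1
            field_simp
    calc ENNReal.ofReal (1 - 1/((N+1:ℕ):ℝ))
        = 1 - ENNReal.ofReal (1/((N+1:ℕ):ℝ)) := by
          rw [← ENNReal.ofReal_one, ← ENNReal.ofReal_sub _ (by positivity)]
      _ ≤ 1 - volume (⋃ i, Bad i) := tsub_le_tsub_left hune 1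
      _ = volume ((⋃ i, Bad i)ᶜ) := by
          rw [measure_compl (MeasurableSet.iUnion hBadm) (measure_ne_top _ _), hPun]
      _ ≤ _ := measure_mono hsub
end
end

section
/- Let X ⊆ S^1 be a finite set containing no antipodal pair (no two points at distance exactly 1/2), and let r = 1/2. Then every point of X is either periodic under f_{1/2} : X → X or lies at level 0, i.e. f_{1/2}^2(X) = f_{1/2}(X), so the image of f_{1/2} consists entirely of periodic points. -/
noncomputable section

/-- `f` is the cyclic dynamical system map `f_r` on the finite set `X`. -/
def IsCyclicMap (X : Finset (AddCircle (1:ℝ))) (r : ℝ)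
    (f : AddCircle (1:ℝ) → AddCircle (1:ℝ)) : Prop :=
  ∀ x ∈ X, f x ∈ X ∧ cdist x (f x) < r ∧
    ∀ y ∈ X, cdist x y < r → cdist x y ≤ cdist x (f x)

namespace HalfSys

noncomputable def L (u : AddCircle (1:ℝ)) : ℝ := ((AddCircle.equivIco 1 0) u).1

lemma L_mem (u : AddCircle (1:ℝ)) : L u ∈ Set.Ico (0:ℝ) 1 := by
  have := ((AddCircle.equivIco 1 0) u).2
  simpa [L] using this

lemma coe_L (u : AddCircle (1:ℝ)) : ((L u : ℝ) : AddCircle (1:ℝ)) = u :=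
  (AddCircle.equivIco 1 0).symm_apply_apply u

lemma L_coe {a : ℝ} (ha : a ∈ Set.Ico (0:ℝ) 1) : L (a : AddCircle (1:ℝ)) = a := by
  have h0 : a ∈ Set.Ico (0:ℝ) (0+1) := by simpa using ha
  have : (AddCircle.equivIco 1 0) ((AddCircle.equivIco 1 0).symm ⟨a, h0⟩) = ⟨a, h0⟩ :=
    (AddCircle.equivIco 1 0).apply_symm_apply _
  have hsymm : ((AddCircle.equivIco 1 0).symm ⟨a, h0⟩ : AddCircle (1:ℝ)) = (a : AddCircle (1:ℝ)) := rfl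
  rw [hsymm] at this
  simpa [L] using congrArg Subtype.val this

lemma L_unique {a : ℝ} (ha : a ∈ Set.Ico (0:ℝ) 1) {u : AddCircle (1:ℝ)}
    (h : (a : AddCircle (1:ℝ)) = u) : L u = a := by rw [← h, L_coe ha]

lemma coe_one : ((1:ℝ) : AddCircle (1:ℝ)) = 0 := by
  simpa using (AddCircle.coe_period (1:ℝ))

lemma cdist_nonneg (x y : AddCircle (1:ℝ)) : 0 ≤ cdist x y := (L_mem (y - x)).1

lemma cdist_sub (x y : AddCircle (1:ℝ)) : ((cdist x y : ℝ) : AddCircle (1:ℝ)) = y - x :=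
  coe_L _

/-- The asymmetric core argument: if `a = f z` is in the image, `f a = f b`, and
`b` is strictly closer (clockwise) to the common image point than `a`, contradiction. -/
lemma asym (X : Finset (AddCircle (1:ℝ)))
    (hanti : ∀ x ∈ X, ∀ y ∈ X, cdist x y ≠ 1/2)
    (f : AddCircle (1:ℝ) → AddCircle (1:ℝ)) (hf : IsCyclicMap X (1/2) f)
    {z a b : AddCircle (1:ℝ)} (hz : z ∈ X) (ha : a ∈ X) (hb : b ∈ X)
    (hza : f z = a) (hfab : f a = f b)
    (hlt : cdist b (f a) < cdist a (f a)) : False := by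
  set y := f a with hy
  set da := cdist a y with hda
  set db := cdist b y with hdb
  have hda2 : da < 1/2 := (hf a ha).2.1
  have hdb0 : 0 ≤ db := cdist_nonneg _ _
  have hdbda : db < da := hlt
  set r2 : ℝ := da - db with hr2
  have hr2pos : 0 < r2 := by simp [hr2]; linarith
  have hr2half : r2 < 1/2 := by simp [hr2]; linarith
  -- cdist a b = r2
  have hcoe_da : ((da : ℝ) : AddCircle (1:ℝ)) = y - a := cdist_sub a y
  have hcoe_db : ((db : ℝ) : AddCircle (1:ℝ)) = y - b := by
    have := cdist_sub b y; simpa [hdb] using this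
  have hba : ((r2 : ℝ) : AddCircle (1:ℝ)) = b - a := by
    rw [hr2, AddCircle.coe_sub, hcoe_da, hcoe_db]; abel
  set r1 := cdist z a with hr1
  have hr1half : r1 < 1/2 := by
    have := (hf z hz).2.1; rwa [hza] at this
  have hr10 : 0 ≤ r1 := cdist_nonneg _ _
  have hcoe_r1 : ((r1 : ℝ) : AddCircle (1:ℝ)) = a - z := cdist_sub z a
  set s : ℝ := r1 + r2 with hs
  have hspos : 0 < s := by positivity
  have hslt1 : s < 1 := by simp [hs]; linarith
  have hcoe_s : ((s : ℝ) : AddCircle (1:ℝ)) = b - z := by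
    rw [hs, AddCircle.coe_add, hcoe_r1, hba]; abel
  rcases lt_trichotomy s (1/2) with hcase | hcase | hcase
  · -- s < 1/2 : b is strictly further than a = f z within range, contradicting maximality
    have hzb : cdist z b = s := L_unique ⟨le_of_lt hspos, hslt1⟩ hcoe_s
    have := (hf z hz).2.2 b hb (by rw [hzb]; exact hcase)
    rw [hzb, hza, ← hr1] at this
    linarith
  · -- s = 1/2 : antipodal pair
    have hzb : cdist z b = s := L_unique ⟨le_of_lt hspos, hslt1⟩ hcoe_s
    exact hanti z hz b hb (by rw [hzb, hcase])
  · -- s > 1/2 : then cdist b z = 1 - s < 1/2, contradicting maximality of f b = y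
    have hmem : (1 - s) ∈ Set.Ico (0:ℝ) 1 := ⟨by linarith, by linarith⟩
    have hcoe : ((1 - s : ℝ) : AddCircle (1:ℝ)) = z - b := by
      rw [AddCircle.coe_sub, coe_one, hcoe_s]; abel
    have hbz : cdist b z = 1 - s := L_unique hmem hcoe
    have hbzhalf : cdist b z < 1/2 := by rw [hbz]; linarith
    have hmax := (hf b hb).2.2 z hz hbzhalf
    rw [hbz, ← hfab, ← hdb] at hmax
    rw [hs] at hmax
    linarith

lemma inj (X : Finset (AddCircle (1:ℝ)))
    (hanti : ∀ x ∈ X, ∀ y ∈ X, cdist x y ≠ 1/2)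
    (f : AddCircle (1:ℝ) → AddCircle (1:ℝ)) (hf : IsCyclicMap X (1/2) f)
    {z1 z2 : AddCircle (1:ℝ)} (hz1 : z1 ∈ X) (hz2 : z2 ∈ X)
    (h : f (f z1) = f (f z2)) : f z1 = f z2 := by
  set a := f z1 with hafz
  set b := f z2 with hbfz
  have ha : a ∈ X := (hf z1 hz1).1
  have hb : b ∈ X := (hf z2 hz2).1
  have hfab : f a = f b := h
  rcases lt_trichotomy (cdist b (f a)) (cdist a (f a)) with hc | hc | hc
  · exact absurd (asym X hanti f hf hz1 ha hb rfl hfab hc) (fun x => x)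
  · -- equal distances to the same point means equal points
    have h1 : ((cdist a (f a) : ℝ) : AddCircle (1:ℝ)) = f a - a := cdist_sub _ _
    have h2 : ((cdist b (f a) : ℝ) : AddCircle (1:ℝ)) = f a - b := by
      have := cdist_sub b (f b); rwa [← hfab] at this
    rw [← hc, h2] at h1
    exact (sub_right_injective h1).symm
  · have hc' : cdist a (f b) < cdist b (f b) := by rwa [hfab] at hc
    exact absurd (asym X hanti f hf hz2 hb ha rfl hfab.symm hc') (fun x => x)

end HalfSys

/-- If the finite set `X ⊆ S¹` contains no antipodal pair, then for `r = 1/2` every point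
of `X` is either periodic under `f_{1/2}` or not in the image of `f_{1/2}`:
`f_{1/2}(f_{1/2}(X)) = f_{1/2}(X)` and every point of the image is periodic. -/
theorem half_system_levels
    (X : Finset (AddCircle (1:ℝ)))
    (hanti : ∀ x ∈ X, ∀ y ∈ X, cdist x y ≠ 1/2)
    (f : AddCircle (1:ℝ) → AddCircle (1:ℝ)) (hf : IsCyclicMap X (1/2) f) :
    Finset.image f (Finset.image f X) = Finset.image f X ∧
    ∀ x ∈ Finset.image f X, ∃ m, 1 ≤ m ∧ f^[m] x = x := by
  classical
  set S := Finset.image f X with hS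
  have hSX : ∀ x ∈ S, x ∈ X := by
    intro x hx; rcases Finset.mem_image.1 hx with ⟨z, hz, rfl⟩; exact (hf z hz).1
  have hfS : ∀ x ∈ S, f x ∈ S := fun x hx => Finset.mem_image_of_mem f (hSX x hx)
  have hinj : ∀ a ∈ S, ∀ b ∈ S, f a = f b → a = b := by
    intro a ha b hb h
    rcases Finset.mem_image.1 ha with ⟨z1, hz1, rfl⟩
    rcases Finset.mem_image.1 hb with ⟨z2, hz2, rfl⟩
    exact HalfSys.inj X hanti f hf hz1 hz2 h
  let F : {x // x ∈ S} → {x // x ∈ S} := fun x => ⟨f x.1, hfS x.1 x.2⟩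
  have hFinj : Function.Injective F := by
    intro a b h
    exact Subtype.ext (hinj a.1 a.2 b.1 b.2 (congrArg Subtype.val h))
  have hiter : ∀ (n : ℕ) (x : {x // x ∈ S}), (F^[n] x).1 = f^[n] x.1 := by
    intro n
    induction n with
    | zero => intro x; rfl
    | succ n ih =>
        intro x
        rw [Function.iterate_succ_apply', Function.iterate_succ_apply']
        exact congrArg f (ih x)
  have hper : ∀ x : {x // x ∈ S}, ∃ m, 1 ≤ m ∧ F^[m] x = x := by
    intro x
    obtain ⟨i, j, hne, hEq⟩ := Finite.exists_ne_map_eq_of_infinite (fun n : ℕ => F^[n] x)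
    have key : ∀ i j : ℕ, i < j → F^[i] x = F^[j] x → ∃ m, 1 ≤ m ∧ F^[m] x = x := by
      intro i j hij hEq
      refine ⟨j - i, by omega, ?_⟩
      have h2 : F^[i] (F^[j - i] x) = F^[i] x := by
        rw [← Function.iterate_add_apply, show i + (j - i) = j by omega]
        exact hEq.symm
      exact (hFinj.iterate i) h2
    rcases hne.lt_or_gt with h | h
    · exact key i j h hEq
    · exact key j i h hEq.symm
  constructor
  · apply Finset.Subset.antisymm
    · intro x hx
      rcases Finset.mem_image.1 hx with ⟨z, hz, rfl⟩
      exact Finset.mem_image_of_mem f (hSX z hz)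
    · intro x hx
      obtain ⟨m, hm, hmx⟩ := hper ⟨x, hx⟩
      have hx' : f^[m] x = x := by
        have h3 := hiter m ⟨x, hx⟩
        rw [hmx] at h3; exact h3.symm
      obtain ⟨k, rfl⟩ : ∃ k, m = k + 1 := ⟨m - 1, by omega⟩
      have hk : f^[k] x ∈ S := by
        have h4 := hiter k ⟨x, hx⟩
        rw [← h4]; exact (F^[k] ⟨x, hx⟩).2
      rw [Function.iterate_succ_apply'] at hx'
      exact Finset.mem_image.2 ⟨f^[k] x, hk, hx'⟩
  · intro x hx
    obtain ⟨m, hm, hmx⟩ := hper ⟨x, hx⟩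
    refine ⟨m, hm, ?_⟩
    have h3 := hiter m ⟨x, hx⟩
    rw [hmx] at h3; exact h3.symm
end
end
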